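/- Let Δ₀ be an integrable real random variable with P(Δ₀ = 0) = 0, and let v be a real random variable on the same probability space with |v| ≤ C almost surely for some constant C. Then lim_{t→0⁺} t⁻¹ ( E[|Δ₀ + t v|] − E[|Δ₀|] ) = E[sgn(Δ₀) v]. -/

import Mathlib

/-!
STATEMENT 4: Gateaux derivative of Δ ↦ E[|Δ|] at Δ₀ in a bounded direction v:
if Δ₀ is integrable with P(Δ₀ = 0) = 0 and |v| ≤ C a.s., then
lim_{t→0⁺} t⁻¹ (E[|Δ₀ + t v|] − E[|Δ₀|]) = E[sgn(Δ₀) v].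
(`Real.sign` is exactly sgn: 1 for positive, 0 at 0, −1 for negative.)
-/

open MeasureTheory Filter

private lemma ptwise_limit (a b : ℝ) (ha : a ≠ 0) :
    Tendsto (fun t : ℝ => t⁻¹ * (|a + t * b| - |a|)) (nhdsWithin 0 (Set.Ioi 0))
      (nhds (Real.sign a * b)) := by
  have hε : (0:ℝ) < |a| / (|b| + 1) := by positivity
  apply Tendsto.congr' _ tendsto_const_nhds
  filter_upwards [Ioo_mem_nhdsGT_of_mem (Set.mem_Ico.2 ⟨le_refl 0, hε⟩)] with t ht
  obtain ⟨ht0, htε⟩ := ht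
  have hbound : t * |b| < |a| := by
    have h1 : t * (|b| + 1) < |a| := by
      rw [← lt_div_iff₀ (by positivity)] ; exact htε
    nlinarith [abs_nonneg b]
  rcases ha.lt_or_gt with hneg | hpos
  · have hs : Real.sign a = -1 := Real.sign_of_neg hneg
    have habs : |a| = -a := abs_of_neg hneg
    have h2 : a + t * b < 0 := by
      have : t * b ≤ t * |b| := by
        have := le_abs_self b; nlinarith
      linarith [habs ▸ hbound]
    rw [hs, abs_of_neg h2, habs]
    field_simp
    ring
  · have hs : Real.sign a = 1 := Real.sign_of_pos hpos
    have habs : |a| = a := abs_of_pos hpos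
    have h2 : 0 < a + t * b := by
      have : -(t * b) ≤ t * |b| := by
        have := neg_abs_le b; nlinarith
      linarith [habs ▸ hbound]
    rw [hs, abs_of_pos h2, habs]
    field_simp
    ring

theorem gateaux_derivative_of_expected_abs
    {Ω : Type*} [MeasurableSpace Ω] (P : Measure Ω) [IsProbabilityMeasure P]
    (Δ₀ v : Ω → ℝ) (C : ℝ)
    (hΔint : Integrable Δ₀ P)
    (hvmeas : AEStronglyMeasurable v P)
    (hvbdd : ∀ᵐ ω ∂P, |v ω| ≤ C)
    (hzero : P {ω | Δ₀ ω = 0} = 0) :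
    Tendsto
      (fun t : ℝ => t⁻¹ * ((∫ ω, |Δ₀ ω + t * v ω| ∂P) - ∫ ω, |Δ₀ ω| ∂P))
      (nhdsWithin 0 (Set.Ioi 0))
      (nhds (∫ ω, Real.sign (Δ₀ ω) * v ω ∂P)) := by
  have hvint : Integrable v P :=
    (integrable_const C).mono' hvmeas (by simpa [Real.norm_eq_abs] using hvbdd)
  have hne : ∀ᵐ ω ∂P, Δ₀ ω ≠ 0 := by
    rw [ae_iff]; simpa using hzero
  set F : ℝ → Ω → ℝ := fun t ω => t⁻¹ * (|Δ₀ ω + t * v ω| - |Δ₀ ω|) with hF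
  have hmain : Tendsto (fun t => ∫ ω, F t ω ∂P) (nhdsWithin 0 (Set.Ioi 0))
      (nhds (∫ ω, Real.sign (Δ₀ ω) * v ω ∂P)) := by
    apply tendsto_integral_filter_of_dominated_convergence (fun _ => C)
    · filter_upwards with t
      have h := ((((hΔint.aestronglyMeasurable.add (hvmeas.const_mul t)).norm).sub
        hΔint.aestronglyMeasurable.norm).const_mul (t⁻¹))
      simpa [Real.norm_eq_abs] using h
    · filter_upwards [self_mem_nhdsWithin] with t ht
      filter_upwards [hvbdd] with ω hω
      have ht0 : (0:ℝ) < t := ht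
      have h1 : |(|Δ₀ ω + t * v ω| - |Δ₀ ω|)| ≤ |t * v ω| := by
        have := abs_abs_sub_abs_le_abs_sub (Δ₀ ω + t * v ω) (Δ₀ ω)
        simpa using this
      have : ‖F t ω‖ ≤ t⁻¹ * (t * |v ω|) := by
        rw [hF, Real.norm_eq_abs, abs_mul, abs_inv, abs_of_pos ht0]
        gcongr
        simpa [abs_mul, abs_of_pos ht0] using h1
      rw [← mul_assoc, inv_mul_cancel₀ (ne_of_gt ht0), one_mul] at this
      exact this.trans hω
    · exact integrable_const C
    · filter_upwards [hne] with ω hω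
      exact ptwise_limit (Δ₀ ω) (v ω) hω
  apply hmain.congr
  intro t
  have hint1 : Integrable (fun ω => |Δ₀ ω + t * v ω|) P :=
    (hΔint.add (hvint.const_mul t)).abs
  rw [hF]
  simp only
  rw [integral_const_mul, integral_sub hint1 hΔint.abs]
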